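/- Let f : [a,b] → ℝ be continuous and integrable on [a,b] with 0 ≤ a < b, let k > 1, and suppose |f|^{k/(k-1)} is (α,m)-convex for some fixed (α,m) ∈ (0,1]². Then for any fixed p, q > 0, ∫_a^b (x-a)^p (b-x)^q f(x) dx ≤ (b-a)^{p+q+1} (α+1)^{-(k-1)/k} [β(kp+1, kq+1)]^{1/k} [|f(a)|^{k/(k-1)} + α m |f(b/m)|^{k/(k-1)}]^{(k-1)/k}. -/

import Mathlib

open Real Set MeasureTheory intervalIntegral
open scoped ENNReal

noncomputable def beta (x y : ℝ) : ℝ := ∫ t in (0:ℝ)..1, t ^ (x-1) * (1-t) ^ (y-1)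

def AMConvexOn (s : Set ℝ) (α m : ℝ) (g : ℝ → ℝ) : Prop :=
  ∀ x ∈ s, ∀ y ∈ s, ∀ t ∈ Set.Icc (0:ℝ) 1, g (t*x + m*(1-t)*y) ≤ t ^ α * g x + m*(1 - t ^ α) * g y

lemma memLp_Icc01 {g : ℝ → ℝ} (hg : ContinuousOn g (Icc 0 1)) (r : ℝ≥0∞) :
    MemLp g r (volume.restrict (Icc (0:ℝ) 1)) := by
  haveI : IsFiniteMeasure (volume.restrict (Icc (0:ℝ) 1)) :=
    ⟨by rw [Measure.restrict_apply_univ]; exact measure_Icc_lt_top⟩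
  obtain ⟨C, hC⟩ := isCompact_Icc.exists_bound_of_continuousOn hg
  refine (memLp_top_of_bound (hg.aestronglyMeasurable measurableSet_Icc) C
    ?_).mono_exponent le_top
  exact (ae_restrict_iff' measurableSet_Icc).2 (Filter.Eventually.of_forall hC)

theorem stmt5 (a b p q : ℝ) (f : ℝ → ℝ)
    (ha : 0 ≤ a) (hab : a < b) (hp : 0 < p) (hq : 0 < q)
    (hcont : ContinuousOn f (Set.Icc a b))
    (hint : IntervalIntegrable f volume a b)
    (k : ℝ) (hk : 1 < k)
    (α m : ℝ) (hα : α ∈ Set.Ioc (0:ℝ) 1) (hm : m ∈ Set.Ioc (0:ℝ) 1)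
    (hf : AMConvexOn (Set.Icc 0 (b/m)) α m (fun x => |f x| ^ (k/(k-1)))) :
    ∫ x in a..b, (x-a)^p * (b-x)^q * f x
      ≤ (b-a)^(p+q+1) * (α+1)^(-((k-1)/k)) * (beta (k*p+1) (k*q+1))^(1/k)
          * (|f a| ^ (k/(k-1)) + α * m * |f (b/m)| ^ (k/(k-1))) ^ ((k-1)/k) := by
  obtain ⟨hα0, hα1⟩ := hα
  obtain ⟨hm0, hm1⟩ := hm
  have hb : 0 < b := lt_of_le_of_lt ha hab
  have hba : 0 < b - a := sub_pos.2 hab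
  have hk0 : 0 < k := lt_trans one_pos hk
  have hk1 : 0 < k - 1 := sub_pos.2 hk
  set k' : ℝ := k / (k - 1) with hk'def
  have hk'pos : 0 < k' := div_pos hk0 hk1
  have hconj : k.HolderConjugate k' := (Real.holderConjugate_iff_eq_conjExponent hk).2 hk'def
  have hk'inv : 1 / k' = (k-1)/k := by rw [hk'def, one_div_div]
  set g : ℝ → ℝ := fun x => |f x| ^ k' with hgdef
  set φ : ℝ → ℝ := fun t => (b - a) * t + a with hφdef
  set X : ℝ := |f a| ^ k' + α * m * |f (b/m)| ^ k' with hXdef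
  have hXnn : 0 ≤ X := by
    have := rpow_nonneg (abs_nonneg (f a)) k'
    have := rpow_nonneg (abs_nonneg (f (b/m))) k'
    positivity
  set μ : Measure ℝ := volume.restrict (Icc (0:ℝ) 1) with hμdef
  set W : ℝ → ℝ := fun t => t ^ p * (1-t) ^ q with hWdef
  set h : ℝ → ℝ := fun t => |f (φ t)| with hhdef
  -- continuity facts
  have hφcont : Continuous φ := by continuity
  have hφmap : MapsTo φ (Icc 0 1) (Icc a b) := by
    intro t ht
    simp only [hφdef]
    constructor
    · nlinarith [ht.1, ht.2, mul_nonneg hba.le ht.1]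
    · nlinarith [ht.1, ht.2]
  have hWcont : Continuous W :=
    (continuous_id.rpow_const fun x => Or.inr hp.le).mul
      ((continuous_const.sub continuous_id).rpow_const fun x => Or.inr hq.le)
  have hhcont : ContinuousOn h (Icc 0 1) :=
    ((hcont.comp hφcont.continuousOn hφmap).abs : ContinuousOn _ _)
  have hAcont : Continuous fun t : ℝ => (1-t) ^ α :=
    (continuous_const.sub continuous_id).rpow_const fun x => Or.inr hα0.le
  -- nonnegativity of W on [0,1]
  have hWnn : ∀ t ∈ Icc (0:ℝ) 1, 0 ≤ W t := fun t ht =>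
    mul_nonneg (rpow_nonneg ht.1 p) (rpow_nonneg (by linarith [ht.2]) q)
  -- Step 1 : bound by absolute value
  have hFcont : ContinuousOn (fun x => (x-a)^p * (b-x)^q * |f x|) (Icc a b) := by
    refine ContinuousOn.mul (ContinuousOn.mul ?_ ?_) hcont.abs
    · exact ((continuous_id.sub continuous_const).rpow_const fun x => Or.inr hp.le).continuousOn
    · exact ((continuous_const.sub continuous_id).rpow_const fun x => Or.inr hq.le).continuousOn
  have hF1cont : ContinuousOn (fun x => (x-a)^p * (b-x)^q * f x) (Icc a b) := by
    refine ContinuousOn.mul (ContinuousOn.mul ?_ ?_) hcont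
    · exact ((continuous_id.sub continuous_const).rpow_const fun x => Or.inr hp.le).continuousOn
    · exact ((continuous_const.sub continuous_id).rpow_const fun x => Or.inr hq.le).continuousOn
  have step1 : ∫ x in a..b, (x-a)^p * (b-x)^q * f x
      ≤ ∫ x in a..b, (x-a)^p * (b-x)^q * |f x| := by
    refine intervalIntegral.integral_mono_on hab.le
      (hF1cont.intervalIntegrable_of_Icc hab.le)
      (hFcont.intervalIntegrable_of_Icc hab.le) (fun x hx => ?_)
    have h1 : 0 ≤ (x-a)^p := rpow_nonneg (by linarith [hx.1]) p
    have h2 : 0 ≤ (b-x)^q := rpow_nonneg (by linarith [hx.2]) q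
    exact mul_le_mul_of_nonneg_left (le_abs_self _) (mul_nonneg h1 h2)
  -- Step 2 : change of variables
  have hsub : ∫ x in a..b, (x-a)^p * (b-x)^q * |f x|
      = (b-a) * ∫ t in (0:ℝ)..1, ((φ t - a)^p * (b - φ t)^q * |f (φ t)|) := by
    have hc := intervalIntegral.integral_comp_mul_add (a := 0) (b := 1)
      (fun x => (x-a)^p * (b-x)^q * |f x|) hba.ne' a
    simp only [mul_zero, zero_add, mul_one, sub_add_cancel, smul_eq_mul] at hc
    rw [hφdef]
    simp only []
    rw [hc]
    field_simp
  have step2 : ∫ t in (0:ℝ)..1, ((φ t - a)^p * (b - φ t)^q * |f (φ t)|)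
      = (b-a)^(p+q) * ∫ t, W t * h t ∂μ := by
    have hcongr : EqOn (fun t => (φ t - a)^p * (b - φ t)^q * |f (φ t)|)
        (fun t => (b-a)^(p+q) * (W t * h t)) (uIcc (0:ℝ) 1) := by
      intro t ht
      rw [uIcc_of_le zero_le_one] at ht
      have h1 : φ t - a = (b-a) * t := by rw [hφdef]; ring
      have h2 : b - φ t = (b-a) * (1-t) := by rw [hφdef]; ring
      simp only [h1, h2, hWdef, hhdef]
      rw [Real.mul_rpow hba.le ht.1, Real.mul_rpow hba.le (by linarith [ht.2]),
        Real.rpow_add hba]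
      ring
    rw [intervalIntegral.integral_congr hcongr, intervalIntegral.integral_const_mul,
      intervalIntegral.integral_of_le zero_le_one, ← integral_Icc_eq_integral_Ioc]
  -- Hölder
  have hWmem : MemLp W (ENNReal.ofReal k) μ := memLp_Icc01 hWcont.continuousOn _
  have hhmem : MemLp h (ENNReal.ofReal k') μ := memLp_Icc01 hhcont _
  have step3 : ∫ t, W t * h t ∂μ
      ≤ (∫ t, W t ^ k ∂μ) ^ (1/k) * (∫ t, h t ^ k' ∂μ) ^ (1/k') := by
    refine MeasureTheory.integral_mul_le_Lp_mul_Lq_of_nonneg hconj ?_ ?_ hWmem hhmem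
    · exact (ae_restrict_iff' measurableSet_Icc).2 (Filter.Eventually.of_forall hWnn)
    · exact Filter.Eventually.of_forall fun t => abs_nonneg _
  -- identify the first factor with beta
  have hbeta : ∫ t, W t ^ k ∂μ = beta (k*p+1) (k*q+1) := by
    rw [hμdef, integral_Icc_eq_integral_Ioc,
      ← intervalIntegral.integral_of_le zero_le_one, beta]
    refine intervalIntegral.integral_congr fun t ht => ?_
    rw [uIcc_of_le zero_le_one] at ht
    simp only [hWdef, add_sub_cancel_right]
    rw [Real.mul_rpow (rpow_nonneg ht.1 p) (rpow_nonneg (by linarith [ht.2]) q),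
      ← Real.rpow_mul ht.1, ← Real.rpow_mul (by linarith [ht.2] : (0:ℝ) ≤ 1-t),
      mul_comm p k, mul_comm q k]
  -- convexity bound on the second factor
  have hIA : ∫ t in (0:ℝ)..1, (1-t) ^ α = 1/(α+1) := by
    rw [intervalIntegral.integral_comp_sub_left (fun x => x ^ α) 1]
    norm_num
    rw [integral_rpow (Or.inl (by linarith))]
    rw [Real.one_rpow, Real.zero_rpow (by positivity)]
    norm_num
  have hmem_a : a ∈ Icc (0:ℝ) (b/m) := by
    constructor
    · exact ha
    · calc a ≤ b := hab.le
        _ ≤ b / m := by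
          rw [le_div_iff₀ hm0]; nlinarith
  have hmem_bm : b/m ∈ Icc (0:ℝ) (b/m) := ⟨by positivity, le_refl _⟩
  have hconv : ∀ t ∈ Icc (0:ℝ) 1,
      h t ^ k' ≤ (1-t) ^ α * g a + m * (1 - (1-t) ^ α) * g (b/m) := by
    intro t ht
    have h1t : (1:ℝ) - t ∈ Icc (0:ℝ) 1 := ⟨by linarith [ht.2], by linarith [ht.1]⟩
    have key := hf a hmem_a (b/m) hmem_bm (1-t) h1t
    have heq : (1-t)*a + m*(1-(1-t))*(b/m) = φ t := by
      rw [hφdef]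
      field_simp
      ring
    rw [heq] at key
    simpa only [hgdef, hhdef] using key
  have hint_lhs : IntegrableOn (fun t => h t ^ k') (Icc (0:ℝ) 1) volume := by
    have : ContinuousOn (fun t => h t ^ k') (Icc (0:ℝ) 1) :=
      hhcont.rpow_const fun t _ => Or.inr hk'pos.le
    exact this.integrableOn_compact isCompact_Icc
  have hint_rhs : IntegrableOn
      (fun t => (1-t) ^ α * g a + m * (1 - (1-t) ^ α) * g (b/m)) (Icc (0:ℝ) 1) volume := by
    exact ((hAcont.mul continuous_const).add
      ((continuous_const.mul (continuous_const.sub hAcont)).mul continuous_const)).integrableOn_Icc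
  have hsecond : ∫ t, h t ^ k' ∂μ ≤ X / (α+1) := by
    have hmono : ∫ t, h t ^ k' ∂μ
        ≤ ∫ t in Icc (0:ℝ) 1, ((1-t) ^ α * g a + m * (1 - (1-t) ^ α) * g (b/m)) :=
      setIntegral_mono_on hint_lhs hint_rhs measurableSet_Icc hconv
    refine hmono.trans_eq ?_
    rw [integral_Icc_eq_integral_Ioc, ← intervalIntegral.integral_of_le zero_le_one]
    have hrw : ∀ t : ℝ, (1-t) ^ α * g a + m * (1 - (1-t) ^ α) * g (b/m)
        = (g a - m * g (b/m)) * (1-t) ^ α + m * g (b/m) := fun t => by ring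
    rw [intervalIntegral.integral_congr (fun t _ => hrw t),
      intervalIntegral.integral_add (f := fun t : ℝ => (g a - m * g (b/m)) * (1-t) ^ α)
        ((continuous_const.mul hAcont).intervalIntegrable 0 1)
        (intervalIntegrable_const),
      intervalIntegral.integral_const_mul, hIA, intervalIntegral.integral_const]
    rw [hXdef, hgdef]
    have : (α:ℝ) + 1 ≠ 0 := by positivity
    field_simp
    ring
  -- assemble
  have hIh_nn : 0 ≤ ∫ t, h t ^ k' ∂μ :=
    integral_nonneg fun t => rpow_nonneg (abs_nonneg _) _
  have hbeta_nn : 0 ≤ beta (k*p+1) (k*q+1) := by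
    rw [← hbeta]
    exact setIntegral_nonneg measurableSet_Icc fun t ht => rpow_nonneg (hWnn t ht) k
  have hfac2 : (∫ t, h t ^ k' ∂μ) ^ (1/k')
      ≤ (α+1) ^ (-((k-1)/k)) * X ^ ((k-1)/k) := by
    have h1 : (∫ t, h t ^ k' ∂μ) ^ (1/k') ≤ (X / (α+1)) ^ (1/k') :=
      Real.rpow_le_rpow hIh_nn hsecond (by positivity)
    refine h1.trans_eq ?_
    rw [hk'inv, Real.div_rpow hXnn (by positivity), Real.rpow_neg (by positivity)]
    ring
  calc ∫ x in a..b, (x-a)^p * (b-x)^q * f x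
      ≤ ∫ x in a..b, (x-a)^p * (b-x)^q * |f x| := step1
    _ = (b-a) * ((b-a)^(p+q) * ∫ t, W t * h t ∂μ) := by rw [hsub, step2]
    _ = (b-a)^(p+q+1) * ∫ t, W t * h t ∂μ := by
        rw [Real.rpow_add hba (p+q) 1, Real.rpow_one]; ring
    _ ≤ (b-a)^(p+q+1) * ((∫ t, W t ^ k ∂μ) ^ (1/k) * (∫ t, h t ^ k' ∂μ) ^ (1/k')) := by
        exact mul_le_mul_of_nonneg_left step3 (by positivity)
    _ ≤ (b-a)^(p+q+1) * ((beta (k*p+1) (k*q+1)) ^ (1/k)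
          * ((α+1) ^ (-((k-1)/k)) * X ^ ((k-1)/k))) := by
        rw [hbeta]
        refine mul_le_mul_of_nonneg_left ?_ (by positivity)
        exact mul_le_mul_of_nonneg_left hfac2 (Real.rpow_nonneg hbeta_nn _)
    _ = (b-a)^(p+q+1) * (α+1)^(-((k-1)/k)) * (beta (k*p+1) (k*q+1))^(1/k) * X ^ ((k-1)/k) := by
        ring
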